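/- If x, y, z ∈ ℝ^d with nonnegative coordinates satisfy |x - y| > 2|x - z|, then for every s ∈ [-1,1]^d, (1/4)·q±(x,y,s) ≤ q±(z,y,s) ≤ 4·q±(x,y,s), where q±(x,y,s) = |x|² + |y|² ± 2 Σᵢ xᵢyᵢsᵢ. -/

import Mathlib

open Real

def qPlus {d : ℕ} (x y s : Fin d → ℝ) : ℝ :=
  ∑ i, (x i)^2 + ∑ i, (y i)^2 + 2 * ∑ i, x i * y i * s i

def qMinus {d : ℕ} (x y s : Fin d → ℝ) : ℝ :=
  ∑ i, (x i)^2 + ∑ i, (y i)^2 - 2 * ∑ i, x i * y i * s i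

lemma dist_sq_sandwich {E : Type*} [PseudoMetricSpace E] (X Y Z : E)
    (h : 2 * dist X Z ≤ dist X Y) :
    (1/4) * dist X Y ^ 2 ≤ dist Z Y ^ 2 ∧ dist Z Y ^ 2 ≤ 4 * dist X Y ^ 2 := by
  have h1 := dist_triangle Z X Y
  have h2 := dist_triangle X Z Y
  have h3 : dist Z X = dist X Z := dist_comm Z X
  have h4 : (0:ℝ) ≤ dist X Z := dist_nonneg
  have h5 : (0:ℝ) ≤ dist Z Y := dist_nonneg
  have h6 : (0:ℝ) ≤ dist X Y := dist_nonneg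
  constructor <;> nlinarith [sq_nonneg (dist Z Y - dist X Y)]

lemma qPlus_as_sum {d : ℕ} (x y s : Fin d → ℝ) :
    qPlus x y s = ∑ i, ((x i)^2 + (y i)^2 + 2 * (x i * y i * s i)) := by
  rw [qPlus, Finset.mul_sum, ← Finset.sum_add_distrib, ← Finset.sum_add_distrib]

lemma keyPlus {d : ℕ} (x y z s : Fin d → ℝ)
    (hx : ∀ i, 0 ≤ x i) (hy : ∀ i, 0 ≤ y i)
    (hs : ∀ i, |s i| ≤ 1)
    (h : Real.sqrt (∑ i, (x i - y i)^2) > 2 * Real.sqrt (∑ i, (x i - z i)^2)) :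
    (1/4) * qPlus x y s ≤ qPlus z y s ∧ qPlus z y s ≤ 4 * qPlus x y s := by
  have hs1 : ∀ i, 0 ≤ 1 - (s i)^2 := by
    intro i
    have := abs_le.mp (hs i)
    nlinarith [this.1, this.2]
  set E := EuclideanSpace ℝ (Fin d ⊕ Fin d)
  let emb : (Fin d → ℝ) → E := fun w => WithLp.toLp 2 (Sum.elim w (fun _ => 0))
  let X : E := emb x
  let Z : E := emb z
  let Y : E := WithLp.toLp 2 (Sum.elim (fun i => -(s i * y i)) (fun i => y i * Real.sqrt (1 - (s i)^2)))
  -- generic computation of dist to Y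
  have key : ∀ w : Fin d → ℝ,
      dist (emb w) Y ^ 2 = qPlus w y s := by
    intro w
    rw [EuclideanSpace.dist_eq]
    rw [Real.sq_sqrt (by positivity)]
    rw [Fintype.sum_sum_type]
    rw [qPlus_as_sum]
    have h1 : ∑ i : Fin d,
        dist (emb w (Sum.inl i)) (Y (Sum.inl i)) ^ 2
        = ∑ i, (w i + s i * y i)^2 := by
      apply Finset.sum_congr rfl
      intro i _
      simp only [emb, PiLp.toLp_apply, Sum.elim_inl, Y, Real.dist_eq]
      rw [sq_abs]
      ring
    have h2 : ∑ i : Fin d,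
        dist (emb w (Sum.inr i)) (Y (Sum.inr i)) ^ 2
        = ∑ i, (y i)^2 * (1 - (s i)^2) := by
      apply Finset.sum_congr rfl
      intro i _
      simp only [emb, PiLp.toLp_apply, Sum.elim_inr, Y, Real.dist_eq]
      rw [sq_abs]
      have : (0 - y i * Real.sqrt (1 - s i ^ 2)) ^ 2
          = (y i)^2 * (Real.sqrt (1 - s i ^ 2))^2 := by ring
      rw [this, Real.sq_sqrt (hs1 i)]
    rw [h1, h2, ← Finset.sum_add_distrib]
    apply Finset.sum_congr rfl
    intro i _
    ring
  have hXY : dist X Y ^ 2 = qPlus x y s := key x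
  have hZY : dist Z Y ^ 2 = qPlus z y s := key z
  have hXZ : dist X Z = Real.sqrt (∑ i, (x i - z i)^2) := by
    rw [EuclideanSpace.dist_eq, Fintype.sum_sum_type]
    congr 1
    have h2 : ∑ i : Fin d, dist (X (Sum.inr i)) (Z (Sum.inr i)) ^ 2 = 0 := by
      apply Finset.sum_eq_zero
      intro i _
      simp [X, Z, emb]
    rw [h2, add_zero]
    apply Finset.sum_congr rfl
    intro i _
    simp only [X, Z, emb, PiLp.toLp_apply, Sum.elim_inl, Real.dist_eq]
    rw [sq_abs]
  -- |x - y|^2 ≤ qPlus x y s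
  have hlow : ∑ i, (x i - y i)^2 ≤ qPlus x y s := by
    rw [qPlus_as_sum]
    apply Finset.sum_le_sum
    intro i _
    have := (abs_le.mp (hs i)).1
    nlinarith [hx i, hy i, mul_nonneg (hx i) (hy i)]
  have hAle : Real.sqrt (∑ i, (x i - y i)^2) ≤ dist X Y := by
    have h0 : dist X Y = Real.sqrt (dist X Y ^ 2) := by
      rw [Real.sqrt_sq dist_nonneg]
    rw [h0, hXY]
    exact Real.sqrt_le_sqrt hlow
  have htri : 2 * dist X Z ≤ dist X Y := by
    rw [hXZ]; linarith
  have := dist_sq_sandwich X Y Z htri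
  rw [hXY, hZY] at this
  exact this

lemma qMinus_eq_qPlus_neg {d : ℕ} (x y s : Fin d → ℝ) :
    qMinus x y s = qPlus x y (fun i => -(s i)) := by
  rw [qMinus, qPlus]
  have : ∑ i, x i * y i * (-(s i)) = -∑ i, x i * y i * s i := by
    rw [← Finset.sum_neg_distrib]
    apply Finset.sum_congr rfl
    intro i _
    ring
  rw [this]
  ring

theorem stmt4 {d : ℕ} (x y z s : Fin d → ℝ)
    (hx : ∀ i, 0 ≤ x i) (hy : ∀ i, 0 ≤ y i) (hz : ∀ i, 0 ≤ z i)
    (hs : ∀ i, |s i| ≤ 1)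
    (h : Real.sqrt (∑ i, (x i - y i)^2) > 2 * Real.sqrt (∑ i, (x i - z i)^2)) :
    ((1/4) * qPlus x y s ≤ qPlus z y s ∧ qPlus z y s ≤ 4 * qPlus x y s) ∧
    ((1/4) * qMinus x y s ≤ qMinus z y s ∧ qMinus z y s ≤ 4 * qMinus x y s) := by
  refine ⟨keyPlus x y z s hx hy hs h, ?_⟩
  have hs' : ∀ i, |(-(s i))| ≤ 1 := by
    intro i; rw [abs_neg]; exact hs i
  have := keyPlus x y z (fun i => -(s i)) hx hy hs' h
  rw [qMinus_eq_qPlus_neg x y s, qMinus_eq_qPlus_neg z y s]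
  exact this
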